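/- Let n ≥ 1 and let f : 𝕋 → M_n(ℂ). Suppose (g₊, g₋) and (h₊, h₋) are two left canonical factorization data for f. Then there exists an invertible matrix C ∈ GL(n, ℂ) such that h₊(z) = g₊(z) · C⁻¹ and h₋(z) = C · g₋(z) for all z in the closed unit disk 𝔻̄. -/

import Mathlib

open Complex Matrix

/-- The closed unit disk in `ℂ`. -/
def closedDisk : Set ℂ := {z : ℂ | ‖z‖ ≤ 1}

/-- The open unit disk in `ℂ`. -/
def openDisk : Set ℂ := {z : ℂ | ‖z‖ < 1}

/-- A left canonical factorization datum for `f : 𝕋 → Mₙ(ℂ)`: a pair `(gp, gm)` of maps on the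
closed unit disk, continuous there, holomorphic on the open disk, taking invertible values, with
`f z = gp z * gm z̄` on the unit circle. -/
structure LeftCanonicalFactorizationDatum (n : ℕ)
    (f gp gm : ℂ → Matrix (Fin n) (Fin n) ℂ) : Prop where
  cont_p : ContinuousOn gp closedDisk
  cont_m : ContinuousOn gm closedDisk
  hol_p : ∀ i j, DifferentiableOn ℂ (fun z => gp z i j) openDisk
  hol_m : ∀ i j, DifferentiableOn ℂ (fun z => gm z i j) openDisk
  unit_p : ∀ z ∈ closedDisk, IsUnit (gp z)
  unit_m : ∀ z ∈ closedDisk, IsUnit (gm z)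
  factor : ∀ z : ℂ, ‖z‖ = 1 → f z = gp z * gm (starRingEnd ℂ z)

lemma closedDisk_eq : closedDisk = Metric.closedBall (0 : ℂ) 1 := by
  ext z; simp [closedDisk, Metric.mem_closedBall, dist_zero_right]

lemma openDisk_eq : openDisk = Metric.ball (0 : ℂ) 1 := by
  ext z; simp [openDisk, Metric.mem_ball, dist_zero_right]

/-- The determinant of a matrix with holomorphic entries is holomorphic. -/
lemma detDiffOn {n : ℕ} {s : Set ℂ} {M : ℂ → Matrix (Fin n) (Fin n) ℂ}
    (h : ∀ i j, DifferentiableOn ℂ (fun z => M z i j) s) :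
    DifferentiableOn ℂ (fun z => (M z).det) s := by
  simp only [Matrix.det_apply']
  apply DifferentiableOn.fun_sum
  intro σ _
  apply DifferentiableOn.const_mul
  exact DifferentiableOn.fun_finset_prod (u := Finset.univ)
    (f := fun i z => M z (σ i) i) (fun i _ => h (σ i) i)

/-- Entries of the adjugate of a matrix with holomorphic entries are holomorphic. -/
lemma adjugateDiffOn {n : ℕ} {s : Set ℂ} {M : ℂ → Matrix (Fin n) (Fin n) ℂ}
    (h : ∀ i j, DifferentiableOn ℂ (fun z => M z i j) s) (i j : Fin n) :
    DifferentiableOn ℂ (fun z => (M z).adjugate i j) s := by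
  simp only [Matrix.adjugate_apply]
  apply detDiffOn
  intro a b
  by_cases haj : a = j
  · simp only [haj, Matrix.updateRow_self]
    exact differentiableOn_const _
  · simp only [Matrix.updateRow_apply, haj, if_false]
    exact h a b

/-- The key scalar rigidity lemma: if `u` and `v` are holomorphic on the open unit disk,
continuous on the closed disk, and `u z = v z̄` on the unit circle, then `u ≡ v 0`. -/
lemma scalar_core (u v : ℂ → ℂ)
    (hu : DiffContOnCl ℂ u (Metric.ball (0 : ℂ) 1))
    (hv : DiffContOnCl ℂ v (Metric.ball (0 : ℂ) 1))
    (hb : ∀ z : ℂ, ‖z‖ = 1 → u z = v (starRingEnd ℂ z)) :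
    ∀ z ∈ Metric.closedBall (0 : ℂ) 1, u z = v 0 := by
  have hclos : closure (Metric.ball (0 : ℂ) 1) = Metric.closedBall (0 : ℂ) 1 :=
    closure_ball (0 : ℂ) one_ne_zero
  have hball : ∀ a ∈ Metric.ball (0 : ℂ) 1, u a = v 0 := by
    intro a ha
    have ha' : ‖a‖ < 1 := by simpa [dist_zero_right] using ha
    have hne : ∀ w : ℂ, ‖w‖ ≤ 1 → 1 - a * w ≠ 0 := by
      intro w hw h0
      have haw : a * w = 1 := by linear_combination -h0
      have h1 : ‖a * w‖ = 1 := by rw [haw]; simp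
      have h2 : ‖a * w‖ < 1 := by
        rw [norm_mul]
        calc ‖a‖ * ‖w‖ ≤ ‖a‖ * 1 := by
              exact mul_le_mul_of_nonneg_left hw (norm_nonneg a)
          _ = ‖a‖ := mul_one _
          _ < 1 := ha'
      exact absurd h1 (ne_of_lt h2)
    set g : ℂ → ℂ := fun w => (1 - a * w)⁻¹ * v w with hgdef
    have hgdc : DiffContOnCl ℂ g (Metric.ball (0 : ℂ) 1) := by
      constructor
      · apply DifferentiableOn.mul
        · apply DifferentiableOn.inv
          · exact (differentiableOn_const 1).sub (differentiableOn_id.const_mul a)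
          · intro x hx
            exact hne x (le_of_lt (by simpa [dist_zero_right] using hx))
        · exact hv.differentiableOn
      · rw [hclos]
        apply ContinuousOn.mul
        · apply ContinuousOn.inv₀
          · exact (continuousOn_const.sub (continuousOn_id.const_smul a))
          · intro x hx
            exact hne x (by simpa [dist_zero_right] using hx)
        · exact hclos ▸ hv.continuousOn
    have h1 : (∮ z in C(0, 1), (z - a)⁻¹ • u z) = (2 * ↑Real.pi * I) • u a :=
      hu.circleIntegral_sub_inv_smul ha
    have h2 : (∮ z in C(0, 1), (z - 0)⁻¹ • g z) = (2 * ↑Real.pi * I) • g 0 :=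
      hgdc.circleIntegral_sub_inv_smul (Metric.mem_ball_self one_pos)
    have hg0 : g 0 = v 0 := by simp [hgdef]
    have h3 : (∮ z in C(0, 1), (z - a)⁻¹ • u z) = ∮ z in C(0, 1), (z - 0)⁻¹ • g z := by
      simp only [circleIntegral]
      have hrefl := intervalIntegral.integral_comp_sub_left (a := 0) (b := 2 * Real.pi)
        (fun θ => deriv (circleMap 0 1) θ • ((circleMap 0 1 θ - a)⁻¹ • u (circleMap 0 1 θ)))
        (2 * Real.pi)
      simp only [sub_self, sub_zero] at hrefl
      rw [← hrefl]
      apply intervalIntegral.integral_congr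
      intro θ _
      -- pointwise computation
      have hcm : ∀ t : ℝ, circleMap 0 1 t = Complex.exp (t * I) := by
        intro t; simp [circleMap]
      have hE : circleMap 0 1 θ = Complex.exp (θ * I) := hcm θ
      have hE' : circleMap 0 1 (2 * Real.pi - θ) = Complex.exp (-(θ : ℂ) * I) := by
        rw [hcm]
        push_cast
        rw [sub_mul, Complex.exp_sub, Complex.exp_two_pi_mul_I]
        rw [neg_mul, Complex.exp_neg]
        ring
      set E : ℂ := Complex.exp ((θ : ℂ) * I) with hEdef
      set E' : ℂ := Complex.exp (-(θ : ℂ) * I) with hE'def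
      have hEE' : E * E' = 1 := by
        rw [hEdef, hE'def, ← Complex.exp_add]
        ring_nf
        exact Complex.exp_zero
      have hEne : E ≠ 0 := Complex.exp_ne_zero _
      have hE'ne : E' ≠ 0 := Complex.exp_ne_zero _
      have hnorm1 : ∀ x : ℝ, ‖Complex.exp ((x : ℂ) * I)‖ = 1 := by
        intro x
        exact Complex.norm_exp_ofReal_mul_I x
      have hE'norm : ‖E'‖ = 1 := by
        rw [hE'def, show -(θ : ℂ) * I = ((-θ : ℝ) : ℂ) * I by push_cast; ring]
        exact hnorm1 (-θ)
      have hE'conj : starRingEnd ℂ E' = E := by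
        rw [hE'def, hEdef, ← Complex.exp_conj]
        congr 1
        simp [Complex.conj_I, Complex.conj_ofReal]
      have huE' : u E' = v E := by rw [hb E' hE'norm, hE'conj]
      have h1aE : 1 - a * E ≠ 0 := by
        apply hne
        rw [hEdef]
        exact le_of_eq (hnorm1 θ)
      have hE'a : E' - a ≠ 0 := by
        intro h0
        have haE' : a = E' := (sub_eq_zero.mp h0).symm
        rw [haE', hE'norm] at ha'
        exact lt_irrefl 1 ha'
      -- key algebraic identity
      have hkey : E' * (E' - a)⁻¹ = (1 - a * E)⁻¹ := by
        have h5 : (1 - a * E) * E' = E' - a := by linear_combination (-a) * hEE'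
        have h6 : (1 - a * E) * (E' * (E' - a)⁻¹) = 1 := by
          rw [← mul_assoc, h5, mul_inv_cancel₀ hE'a]
        exact (eq_inv_of_mul_eq_one_right h6)
      simp only [deriv_circleMap, hE', hE, huE', hgdef, smul_eq_mul, sub_zero]
      calc E' * I * ((E' - a)⁻¹ * v E)
          = I * ((E' * (E' - a)⁻¹) * v E) := by ring
        _ = I * ((1 - a * E)⁻¹ * v E) := by rw [hkey]
        _ = E * I * (E⁻¹ * ((1 - a * E)⁻¹ * v E)) := by
            field_simp
    have h4 : (2 * ↑Real.pi * I) • u a = (2 * ↑Real.pi * I) • v 0 := by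
      rw [← h1, h3, h2, hg0]
    have hpne : (2 * ↑Real.pi * I : ℂ) ≠ 0 := by
      simp [Real.pi_ne_zero, Complex.I_ne_zero]
    simpa only [smul_eq_mul] using mul_left_cancel₀ hpne h4
  have := Set.EqOn.of_subset_closure (s := Metric.ball (0 : ℂ) 1)
    (t := Metric.closedBall (0 : ℂ) 1) (f := u) (g := fun _ => v 0)
    hball (hclos ▸ hu.continuousOn) continuousOn_const Metric.ball_subset_closedBall
    (le_of_eq hclos.symm)
  exact fun z hz => this hz

/-- Two left canonical factorization data of the same symbol differ by a constant invertible
matrix. -/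
theorem left_canonical_factorization_unique_up_to_constant
    {n : ℕ} (hn : 1 ≤ n) (f gp gm hp hm : ℂ → Matrix (Fin n) (Fin n) ℂ)
    (hg : LeftCanonicalFactorizationDatum n f gp gm)
    (hh : LeftCanonicalFactorizationDatum n f hp hm) :
    ∃ C : Matrix (Fin n) (Fin n) ℂ, IsUnit C ∧
      ∀ z ∈ closedDisk, hp z = gp z * C⁻¹ ∧ hm z = C * gm z := by
  classical
  have hsub : openDisk ⊆ closedDisk := fun z hz => show ‖z‖ ≤ 1 from le_of_lt hz
  -- determinants are nonzero units
  have hgpdet : ∀ z ∈ closedDisk, IsUnit (gp z).det :=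
    fun z hz => (Matrix.isUnit_iff_isUnit_det _).mp (hg.unit_p z hz)
  have hgmdet : ∀ z ∈ closedDisk, IsUnit (gm z).det :=
    fun z hz => (Matrix.isUnit_iff_isUnit_det _).mp (hg.unit_m z hz)
  have hhpdet : ∀ z ∈ closedDisk, IsUnit (hp z).det :=
    fun z hz => (Matrix.isUnit_iff_isUnit_det _).mp (hh.unit_p z hz)
  have hhmdet : ∀ z ∈ closedDisk, IsUnit (hm z).det :=
    fun z hz => (Matrix.isUnit_iff_isUnit_det _).mp (hh.unit_m z hz)
  set F : ℂ → Matrix (Fin n) (Fin n) ℂ := fun z => (gp z)⁻¹ * hp z with hFdef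
  set G : ℂ → Matrix (Fin n) (Fin n) ℂ := fun w => gm w * (hm w)⁻¹ with hGdef
  -- boundary relation F z = G z̄ on the circle
  have hbd : ∀ z : ℂ, ‖z‖ = 1 → F z = G (starRingEnd ℂ z) := by
    intro z hz
    have hzD : z ∈ closedDisk := show ‖z‖ ≤ 1 from le_of_eq hz
    have hzcD : starRingEnd ℂ z ∈ closedDisk := by
      show ‖starRingEnd ℂ z‖ ≤ 1
      rw [RCLike.norm_conj]; exact le_of_eq hz
    have heq : gp z * gm (starRingEnd ℂ z) = hp z * hm (starRingEnd ℂ z) :=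
      (hg.factor z hz).symm.trans (hh.factor z hz)
    show (gp z)⁻¹ * hp z = gm (starRingEnd ℂ z) * (hm (starRingEnd ℂ z))⁻¹
    calc (gp z)⁻¹ * hp z
        = (gp z)⁻¹ * (hp z * hm (starRingEnd ℂ z) * (hm (starRingEnd ℂ z))⁻¹) := by
          rw [Matrix.mul_nonsing_inv_cancel_right _ _ (hhmdet _ hzcD)]
      _ = (gp z)⁻¹ * (gp z * gm (starRingEnd ℂ z) * (hm (starRingEnd ℂ z))⁻¹) := by
          rw [← heq]
      _ = (gp z)⁻¹ * (gp z * (gm (starRingEnd ℂ z) * (hm (starRingEnd ℂ z))⁻¹)) := by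
          rw [Matrix.mul_assoc]
      _ = gm (starRingEnd ℂ z) * (hm (starRingEnd ℂ z))⁻¹ := by
          rw [Matrix.nonsing_inv_mul_cancel_left _ _ (hgpdet _ hzD)]
  -- entrywise analytic structure
  have inv_entry : ∀ (A : ℂ → Matrix (Fin n) (Fin n) ℂ) (z : ℂ) (i j : Fin n),
      (A z)⁻¹ i j = ((A z).det)⁻¹ * (A z).adjugate i j := by
    intro A z i j
    rw [Matrix.inv_def, Ring.inverse_eq_inv', Matrix.smul_apply, smul_eq_mul]
  have inv_entry_diff : ∀ (A : ℂ → Matrix (Fin n) (Fin n) ℂ),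
      (∀ i j, DifferentiableOn ℂ (fun z => A z i j) openDisk) →
      (∀ z ∈ closedDisk, IsUnit (A z).det) →
      ∀ i j, DifferentiableOn ℂ (fun z => (A z)⁻¹ i j) openDisk := by
    intro A hA hAu i j
    simp only [inv_entry A]
    apply DifferentiableOn.mul
    · apply DifferentiableOn.inv (detDiffOn hA)
      intro x hx
      exact (hAu x (hsub hx)).ne_zero
    · exact adjugateDiffOn hA i j
  have inv_entry_cont : ∀ (A : ℂ → Matrix (Fin n) (Fin n) ℂ),
      ContinuousOn A closedDisk →
      (∀ z ∈ closedDisk, IsUnit (A z).det) →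
      ∀ i j, ContinuousOn (fun z => (A z)⁻¹ i j) closedDisk := by
    intro A hA hAu i j
    simp only [inv_entry A]
    apply ContinuousOn.mul
    · apply ContinuousOn.inv₀
      · exact (continuous_id.matrix_det).comp_continuousOn hA
      · intro x hx
        exact (hAu x hx).ne_zero
    · exact (((continuous_apply j).comp ((continuous_apply i).comp
        (continuous_id.matrix_adjugate))).comp_continuousOn hA)
  have entry_cont : ∀ (A : ℂ → Matrix (Fin n) (Fin n) ℂ),
      ContinuousOn A closedDisk → ∀ i j, ContinuousOn (fun z => A z i j) closedDisk := by
    intro A hA i j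
    have h1 : Continuous (fun M : Matrix (Fin n) (Fin n) ℂ => M i j) :=
      (continuous_apply j).comp (continuous_apply (A := fun _ => Fin n → ℂ) i)
    exact h1.comp_continuousOn hA
  -- DiffContOnCl for entries of F and G
  have hFdc : ∀ i j, DiffContOnCl ℂ (fun z => F z i j) (Metric.ball (0 : ℂ) 1) := by
    intro i j
    constructor
    · rw [← openDisk_eq]
      have : ∀ z, F z i j = ∑ k, (gp z)⁻¹ i k * hp z k j := by
        intro z; rw [hFdef]; exact Matrix.mul_apply
      simp only [this]
      apply DifferentiableOn.fun_sum
      intro k _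
      exact (inv_entry_diff gp hg.hol_p hgpdet i k).mul (hh.hol_p k j)
    · rw [closure_ball (0 : ℂ) one_ne_zero, ← closedDisk_eq]
      have : ∀ z, F z i j = ∑ k, (gp z)⁻¹ i k * hp z k j := by
        intro z; rw [hFdef]; exact Matrix.mul_apply
      simp only [this]
      apply continuousOn_finset_sum
      intro k _
      exact (inv_entry_cont gp hg.cont_p hgpdet i k).mul (entry_cont hp hh.cont_p k j)
  have hGdc : ∀ i j, DiffContOnCl ℂ (fun z => G z i j) (Metric.ball (0 : ℂ) 1) := by
    intro i j
    constructor
    · rw [← openDisk_eq]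
      have : ∀ z, G z i j = ∑ k, gm z i k * (hm z)⁻¹ k j := by
        intro z; rw [hGdef]; exact Matrix.mul_apply
      simp only [this]
      apply DifferentiableOn.fun_sum
      intro k _
      exact (hg.hol_m i k).mul (inv_entry_diff hm hh.hol_m hhmdet k j)
    · rw [closure_ball (0 : ℂ) one_ne_zero, ← closedDisk_eq]
      have : ∀ z, G z i j = ∑ k, gm z i k * (hm z)⁻¹ k j := by
        intro z; rw [hGdef]; exact Matrix.mul_apply
      simp only [this]
      apply continuousOn_finset_sum
      intro k _
      exact (entry_cont gm hg.cont_m i k).mul (inv_entry_cont hm hh.cont_m hhmdet k j)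
  -- apply the scalar rigidity lemma entrywise
  have hFconst : ∀ z ∈ closedDisk, F z = G 0 := by
    intro z hz
    ext i j
    have := scalar_core (fun z => F z i j) (fun w => G w i j) (hFdc i j) (hGdc i j)
      (fun w hw => by show F w i j = G (starRingEnd ℂ w) i j; rw [hbd w hw])
    exact this z (by rwa [← closedDisk_eq])
  have hGconst : ∀ z ∈ closedDisk, G z = F 0 := by
    intro z hz
    ext i j
    have hb' : ∀ w : ℂ, ‖w‖ = 1 → G w i j = F (starRingEnd ℂ w) i j := by
      intro w hw
      have hw' : ‖starRingEnd ℂ w‖ = 1 := by rw [RCLike.norm_conj]; exact hw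
      show G w i j = F (starRingEnd ℂ w) i j
      rw [hbd (starRingEnd ℂ w) hw']
      simp
    have := scalar_core (fun w => G w i j) (fun z => F z i j) (hGdc i j) (hFdc i j) hb'
    exact this z (by rwa [← closedDisk_eq])
  have h0D : (0 : ℂ) ∈ closedDisk := by show ‖(0:ℂ)‖ ≤ 1; simp
  have hFG0 : F 0 = G 0 := hFconst 0 h0D
  set D : Matrix (Fin n) (Fin n) ℂ := G 0 with hDdef
  have hDunit : IsUnit D := by
    rw [hDdef, hGdef]
    exact (hg.unit_m 0 h0D).mul
      ((Matrix.isUnit_iff_isUnit_det _).mpr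
        (Matrix.isUnit_nonsing_inv_det _ (hhmdet 0 h0D)))
  have hDdet : IsUnit D.det := (Matrix.isUnit_iff_isUnit_det _).mp hDunit
  refine ⟨D⁻¹, (Matrix.isUnit_iff_isUnit_det _).mpr (Matrix.isUnit_nonsing_inv_det _ hDdet), ?_⟩
  intro z hz
  have hDinv : D⁻¹⁻¹ = D := Matrix.nonsing_inv_nonsing_inv _ hDdet
  constructor
  · rw [hDinv]
    have hFz : (gp z)⁻¹ * hp z = D := hFconst z hz
    calc hp z = gp z * ((gp z)⁻¹ * hp z) :=
          (Matrix.mul_nonsing_inv_cancel_left _ _ (hgpdet z hz)).symm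
      _ = gp z * D := by rw [hFz]
  · have hGz' : gm z * (hm z)⁻¹ = D := (hGconst z hz).trans hFG0
    have h5 : gm z = D * hm z := by
      calc gm z = gm z * (hm z)⁻¹ * hm z :=
            (Matrix.nonsing_inv_mul_cancel_right _ _ (hhmdet z hz)).symm
        _ = D * hm z := by rw [hGz']
    calc hm z = D⁻¹ * (D * hm z) :=
          (Matrix.nonsing_inv_mul_cancel_left _ _ hDdet).symm
      _ = D⁻¹ * gm z := by rw [← h5]
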